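/- Let f : ℝ → ℝ be a function of period 1 that is differentiable with derivative f′ satisfying |f′(x) − f′(y)| ≤ C·|x − y| for all x, y ∈ ℝ. Then for every x ∈ ℝ and every positive integer n, |∫_0^1 f(t) dt − (1/n)·Σ_{m=1}^{n} f(x + m/n)| ≤ C/n². -/

import Mathlib

open Filter

-- Taylor-type bound from Lipschitz derivative
lemma aux_taylor (f f' : ℝ → ℝ) (C : ℝ)
    (hderiv : ∀ x : ℝ, HasDerivAt f (f' x) x)
    (hlip : ∀ x y : ℝ, |f' x - f' y| ≤ C * |x - y|)
    {t b : ℝ} (h : t ≤ b) :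
    |f t - f b - (t - b) * f' b| ≤ C * (b - t) ^ 2 := by
  set g : ℝ → ℝ := fun u => f u - u * f' b with hg
  have hgd : ∀ u ∈ Set.Icc t b, HasDerivWithinAt g (f' u - f' b) (Set.Icc t b) u := by
    intro u _
    exact (((hderiv u).sub (by simpa using (hasDerivAt_id u).mul_const (f' b)))).hasDerivWithinAt
  have bound : ∀ u ∈ Set.Icc t b, ‖f' u - f' b‖ ≤ C * (b - t) := by
    intro u hu
    have := hlip u b
    have h1 : |u - b| ≤ b - t := by
      rw [abs_sub_comm, abs_of_nonneg (by linarith [hu.2])]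
      linarith [hu.1]
    have hC : 0 ≤ C := by
      by_cases hud : t = b
      · have := (abs_nonneg (f' 0 - f' 1)).trans (hlip 0 1); simpa using this
      · nlinarith [abs_nonneg (f' t - f' b), hlip t b, abs_pos.2 (sub_ne_zero.2 hud),
          abs_nonneg (t - b)]
    calc ‖f' u - f' b‖ = |f' u - f' b| := rfl
      _ ≤ C * |u - b| := hlip u b
      _ ≤ C * (b - t) := by nlinarith
  have key := (convex_Icc t b).norm_image_sub_le_of_norm_hasDerivWithin_le hgd bound
    (Set.right_mem_Icc.2 h) (Set.left_mem_Icc.2 h)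
  have : ‖g t - g b‖ ≤ C * (b - t) * ‖t - b‖ := key
  rw [Real.norm_eq_abs, Real.norm_eq_abs] at this
  have e1 : g t - g b = f t - f b - (t - b) * f' b := by simp [hg]; ring
  have e2 : |t - b| = b - t := by rw [abs_sub_comm, abs_of_nonneg (by linarith)]
  rw [e1, e2] at this
  calc |f t - f b - (t - b) * f' b| ≤ C * (b - t) * (b - t) := this
    _ = C * (b - t) ^ 2 := by ring


/-- **Wintner's estimate (Proposition 1).**
If `f : ℝ → ℝ` has period 1 and is differentiable with derivative `f'` satisfying
a Lipschitz condition with constant `C`, then for every `x` and every `n ≥ 1`,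
`|∫_0^1 f(t) dt − (1/n)·∑_{m=1}^n f(x + m/n)| ≤ C/n²`. -/
theorem abs_integral_sub_average_le
    (f f' : ℝ → ℝ) (C : ℝ)
    (hper : Function.Periodic f 1)
    (hderiv : ∀ x : ℝ, HasDerivAt f (f' x) x)
    (hlip : ∀ x y : ℝ, |f' x - f' y| ≤ C * |x - y|) :
    ∀ x : ℝ, ∀ n : ℕ, 1 ≤ n →
      |(∫ t in (0:ℝ)..1, f t) -
        (1 / (n : ℝ)) * ∑ m ∈ Finset.Icc 1 n, f (x + (m : ℝ) / n)| ≤ C / (n : ℝ) ^ 2 := by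
  intro x n hn
  have hC : 0 ≤ C := by
    have := (abs_nonneg (f' 0 - f' 1)).trans (hlip 0 1); simpa using this
  have hfc : Continuous f := continuous_iff_continuousAt.mpr fun y => (hderiv y).continuousAt
  have hf'c : Continuous f' := by
    have : LipschitzWith ⟨C, hC⟩ f' :=
      LipschitzWith.of_dist_le_mul fun p q => by
        rw [Real.dist_eq, Real.dist_eq]; exact hlip p q
    exact this.continuous
  have hfi : ∀ p q : ℝ, IntervalIntegrable f MeasureTheory.volume p q :=
    fun p q => hfc.intervalIntegrable p q
  have hf'i : ∀ p q : ℝ, IntervalIntegrable f' MeasureTheory.volume p q :=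
    fun p q => hf'c.intervalIntegrable p q
  have hN : (0:ℝ) < n := by exact_mod_cast Nat.lt_of_lt_of_le Nat.zero_lt_one hn
  set N : ℝ := (n : ℝ) with hNdef
  set a : ℕ → ℝ := fun i => x + i / N with ha
  have ha0 : a 0 = x := by simp [ha]
  have han : a n = x + 1 := by
    simp only [ha]
    rw [div_self (ne_of_gt hN)]
  have hstep : ∀ i : ℕ, a (i+1) - a i = 1 / N := by
    intro i; simp only [ha]; push_cast; field_simp; ring
  have hle : ∀ i : ℕ, a i ≤ a (i+1) := by
    intro i
    have := hstep i
    have : a (i+1) = a i + 1/N := by linarith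
    rw [this]
    have : 0 < 1/N := by positivity
    linarith
  -- Step 1: integral over period
  have I1 : (∫ t in (0:ℝ)..1, f t) = ∑ i ∈ Finset.range n, ∫ t in a i..a (i+1), f t := by
    have h1 := hper.intervalIntegral_add_eq 0 x
    rw [zero_add] at h1
    have h2 := intervalIntegral.sum_integral_adjacent_intervals
      (a := a) (n := n) (μ := MeasureTheory.volume) (fun k _ => hfi _ _)
    rw [ha0, han] at h2
    rw [h1, ← h2]
  -- Step 2: reindex sum
  have I2 : ∑ m ∈ Finset.Icc 1 n, f (x + (m:ℝ) / n) = ∑ i ∈ Finset.range n, f (a (i+1)) := by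
    have himg : Finset.Icc 1 n = Finset.image (· + 1) (Finset.range n) := by
      ext m
      simp only [Finset.mem_Icc, Finset.mem_image, Finset.mem_range]
      constructor
      · rintro ⟨h1, h2⟩; exact ⟨m - 1, by omega, by omega⟩
      · rintro ⟨i, hi, rfl⟩; omega
    rw [himg, Finset.sum_image (by intro p _ q _ h; dsimp only at h; omega)]
  rw [I1, I2, Finset.mul_sum, ← Finset.sum_sub_distrib]
  set R : ℕ → ℝ := fun i =>
    ∫ t in a i..a (i+1), (f t - (f (a (i+1)) + (t - a (i+1)) * f' (a (i+1)))) with hRdef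
  -- integral of the linear part
  have e1 : ∀ i : ℕ, (∫ t in a i..a (i+1), (t - a (i+1))) = -(1/(2*N^2)) := by
    intro i
    rw [intervalIntegral.integral_sub intervalIntegral.intervalIntegrable_id
      intervalIntegrable_const, integral_id, intervalIntegral.integral_const, smul_eq_mul]
    linear_combination (-(a (i+1) - a i + 1/N)/2) * hstep i
  have e2 : ∀ i : ℕ, (∫ t in a i..a (i+1),
      (f (a (i+1)) + (t - a (i+1)) * f' (a (i+1))))
      = 1/N * f (a (i+1)) - 1/(2*N^2) * f' (a (i+1)) := by
    intro i
    rw [intervalIntegral.integral_add intervalIntegrable_const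
      ((intervalIntegral.intervalIntegrable_id.sub intervalIntegrable_const).mul_const _),
      intervalIntegral.integral_const, intervalIntegral.integral_mul_const, e1 i, smul_eq_mul]
    linear_combination (f (a (i+1))) * hstep i
  have hsplit : ∀ i ∈ Finset.range n,
      (∫ t in a i..a (i+1), f t) - 1/N * f (a (i+1))
        = R i - 1/(2*N^2) * f' (a (i+1)) := by
    intro i _
    have : R i = (∫ t in a i..a (i+1), f t)
        - (1/N * f (a (i+1)) - 1/(2*N^2) * f' (a (i+1))) := by
      simp only [hRdef]
      rw [intervalIntegral.integral_sub (hfi _ _)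
        (intervalIntegrable_const.add
          ((intervalIntegral.intervalIntegrable_id.sub intervalIntegrable_const).mul_const _)),
        e2 i]
    rw [this]; ring
  rw [Finset.sum_congr rfl hsplit, Finset.sum_sub_distrib, ← Finset.mul_sum]
  -- bound on each R i
  have hRb : ∀ i ∈ Finset.range n, |R i| ≤ C / N^3 / 3 := by
    intro i _
    have hab := hle i
    have hint1 : IntervalIntegrable
        (fun t => |f t - (f (a (i+1)) + (t - a (i+1)) * f' (a (i+1)))|)
        MeasureTheory.volume (a i) (a (i+1)) :=
      ((hfc.sub (continuous_const.add
        ((continuous_id.sub continuous_const).mul continuous_const))).abs).intervalIntegrable _ _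
    have hint2 : IntervalIntegrable (fun t => C * (a (i+1) - t)^2)
        MeasureTheory.volume (a i) (a (i+1)) :=
      (continuous_const.mul ((continuous_const.sub continuous_id).pow 2)).intervalIntegrable _ _
    calc |R i| ≤ ∫ t in a i..a (i+1),
          |f t - (f (a (i+1)) + (t - a (i+1)) * f' (a (i+1)))| :=
        intervalIntegral.abs_integral_le_integral_abs hab
      _ ≤ ∫ t in a i..a (i+1), C * (a (i+1) - t)^2 := by
        apply intervalIntegral.integral_mono_on hab hint1 hint2
        intro t ht
        have h1 := aux_taylor f f' C hderiv hlip ht.2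
        have h2 : f t - (f (a (i+1)) + (t - a (i+1)) * f' (a (i+1)))
            = f t - f (a (i+1)) - (t - a (i+1)) * f' (a (i+1)) := by ring
        rw [h2]; exact h1
      _ = C / N^3 / 3 := by
        rw [intervalIntegral.integral_const_mul,
          intervalIntegral.integral_comp_sub_left (fun u => u^2) (a (i+1)), sub_self,
          hstep i, integral_pow]
        push_cast
        field_simp
        try ring
        try exact Or.inl (by ring)
  -- the sum of derivative values
  have hzero : ∑ i ∈ Finset.range n, (∫ s in a i..a (i+1), f' s) = 0 := by
    rw [intervalIntegral.sum_integral_adjacent_intervals (fun k _ => hf'i _ _), ha0, han,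
      intervalIntegral.integral_eq_sub_of_hasDerivAt (fun t _ => hderiv t) (hf'i _ _)]
    simp [hper x]
  have hterm : ∀ i ∈ Finset.range n,
      |f' (a (i+1)) - N * ∫ s in a i..a (i+1), f' s| ≤ C / (2*N) := by
    intro i _
    have hab := hle i
    have key : f' (a (i+1)) - N * ∫ s in a i..a (i+1), f' s
        = N * ∫ s in a i..a (i+1), (f' (a (i+1)) - f' s) := by
      rw [intervalIntegral.integral_sub intervalIntegrable_const (hf'i _ _),
        intervalIntegral.integral_const, smul_eq_mul, hstep i]
      field_simp
      try norm_num
      try ring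
    rw [key, abs_mul, abs_of_pos hN]
    have hint1 : IntervalIntegrable (fun s => |f' (a (i+1)) - f' s|)
        MeasureTheory.volume (a i) (a (i+1)) :=
      ((continuous_const.sub hf'c).abs).intervalIntegrable _ _
    have hint2 : IntervalIntegrable (fun s => C * (a (i+1) - s))
        MeasureTheory.volume (a i) (a (i+1)) :=
      (continuous_const.mul (continuous_const.sub continuous_id)).intervalIntegrable _ _
    have hintb : |∫ s in a i..a (i+1), (f' (a (i+1)) - f' s)| ≤ C / (2*N^2) := by
      calc |∫ s in a i..a (i+1), (f' (a (i+1)) - f' s)|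
          ≤ ∫ s in a i..a (i+1), |f' (a (i+1)) - f' s| :=
          intervalIntegral.abs_integral_le_integral_abs hab
        _ ≤ ∫ s in a i..a (i+1), C * (a (i+1) - s) := by
          apply intervalIntegral.integral_mono_on hab hint1 hint2
          intro s hs
          calc |f' (a (i+1)) - f' s| ≤ C * |a (i+1) - s| := hlip _ _
            _ = C * (a (i+1) - s) := by
              rw [abs_of_nonneg (by linarith [hs.2])]
        _ = C / (2*N^2) := by
          rw [intervalIntegral.integral_const_mul,
            intervalIntegral.integral_comp_sub_left (fun u => u) (a (i+1)), sub_self,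
            hstep i, integral_id]
          field_simp
          try ring
          try exact Or.inl (by ring)
    have hmul := mul_le_mul_of_nonneg_left hintb (le_of_lt hN)
    have heq2 : N * (C / (2*N^2)) = C / (2*N) := by
      field_simp
    linarith
  have hS : |∑ i ∈ Finset.range n, f' (a (i+1))| ≤ C / 2 := by
    have hrw : ∑ i ∈ Finset.range n, f' (a (i+1))
        = ∑ i ∈ Finset.range n, (f' (a (i+1)) - N * ∫ s in a i..a (i+1), f' s) := by
      rw [Finset.sum_sub_distrib, ← Finset.mul_sum, hzero, mul_zero, sub_zero]
    rw [hrw]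
    calc |∑ i ∈ Finset.range n, (f' (a (i+1)) - N * ∫ s in a i..a (i+1), f' s)|
        ≤ ∑ i ∈ Finset.range n, |f' (a (i+1)) - N * ∫ s in a i..a (i+1), f' s| :=
        Finset.abs_sum_le_sum_abs _ _
      _ ≤ ∑ i ∈ Finset.range n, (C / (2*N)) := Finset.sum_le_sum hterm
      _ = N * (C / (2*N)) := by rw [Finset.sum_const, Finset.card_range, nsmul_eq_mul]
      _ = C / 2 := by
        field_simp
        try ring
        try exact Or.inl (by ring)
  have hRsum : |∑ i ∈ Finset.range n, R i| ≤ C / (3 * N^2) := by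
    calc |∑ i ∈ Finset.range n, R i| ≤ ∑ i ∈ Finset.range n, |R i| :=
        Finset.abs_sum_le_sum_abs _ _
      _ ≤ ∑ i ∈ Finset.range n, (C / N^3 / 3) := Finset.sum_le_sum hRb
      _ = N * (C / N^3 / 3) := by rw [Finset.sum_const, Finset.card_range, nsmul_eq_mul]
      _ = C / (3 * N^2) := by
        field_simp
        try ring
        try exact Or.inl (by ring)
  calc |(∑ i ∈ Finset.range n, R i) - 1/(2*N^2) * ∑ i ∈ Finset.range n, f' (a (i+1))|
      ≤ |∑ i ∈ Finset.range n, R i|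
        + |1/(2*N^2)| * |∑ i ∈ Finset.range n, f' (a (i+1))| := by
        rw [← abs_mul]; exact abs_sub _ _
    _ ≤ C / (3 * N^2) + (1/(2*N^2)) * (C / 2) := by
        have habs : |1/(2*N^2)| = 1/(2*N^2) := abs_of_pos (by positivity)
        rw [habs]
        have := mul_le_mul_of_nonneg_left hS (by positivity : (0:ℝ) ≤ 1/(2*N^2))
        linarith [hRsum, this]
    _ ≤ C / N^2 := by
        have heq : C / (3 * N^2) + (1/(2*N^2)) * (C / 2) = (7*C/12) / N^2 := by
          field_simp
          try ring
          try exact Or.inl (by ring)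
        rw [heq]
        apply div_le_div_of_nonneg_right ?_ (by positivity)
        linarith
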